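/- arXiv:2108.11227 — 3 statements merged into one kernel-verified Lean document; each statement's English description precedes it below -/
import Mathlib

section
/- Let A be a p-torsion free commutative ring and σ : A → A a ring homomorphism satisfying σ(x) ≡ x^p (mod pA) for all x ∈ A (a Frobenius lift). Then there exists a unique ring homomorphism s : A → W(A) to the ring of p-typical Witt vectors such that the composite of s with the n-th ghost component map W(A) → A equals σ^n for every n ≥ 0. -/
open WittVector Finset

section Aux

variable {p : ℕ} [Fact p.Prime] {A : Type*} [CommRing A]

lemma aux_pow_cancel (htf : ∀ x : A, (p : A) * x = 0 → x = 0) :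
    ∀ (n : ℕ) (x : A), (p : A) ^ n * x = 0 → x = 0 := by
  intro n
  induction n with
  | zero => intro x hx; simpa using hx
  | succ m ih =>
    intro x hx
    apply htf
    apply ih
    rw [← mul_assoc, mul_comm ((p:A)^m) (p:A), ← pow_succ']
    exact hx

lemma aux_ghost_inj (htf : ∀ x : A, (p : A) * x = 0 → x = 0)
    (u v : WittVector p A) (h : ∀ n, ghostComponent n u = ghostComponent n v) : u = v := by
  ext n
  induction n using Nat.strong_induction_on with
  | _ n ih =>
    have h' := h n
    rw [ghostComponent_apply, ghostComponent_apply, aeval_wittPolynomial,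
      aeval_wittPolynomial, Finset.sum_range_succ, Finset.sum_range_succ] at h'
    have hs : ∑ i ∈ range n, (p : A) ^ i * u.coeff i ^ p ^ (n - i)
        = ∑ i ∈ range n, (p : A) ^ i * v.coeff i ^ p ^ (n - i) := by
      apply Finset.sum_congr rfl
      intro i hi
      rw [ih i (Finset.mem_range.mp hi)]
    rw [hs] at h'
    have h2 := add_left_cancel h'
    simp only [Nat.sub_self, pow_zero, pow_one] at h2
    have h3 : (p : A) ^ n * (u.coeff n - v.coeff n) = 0 := by
      rw [mul_sub, h2, sub_self]
    exact sub_eq_zero.mp (aux_pow_cancel htf n _ h3)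

/-- the key divisibility -/
lemma aux_dvd (σ : A →+* A) (hσ : ∀ x : A, σ x - x ^ p ∈ Ideal.span {(p : A)})
    (x : A) (n : ℕ) (a : ℕ → A)
    (ha : ∀ i < n, ∑ j ∈ range (i + 1), (p : A) ^ j * a j ^ p ^ (i - j) = σ^[i] x) :
    (p : A) ^ n ∣ σ^[n] x - ∑ i ∈ range n, (p : A) ^ i * a i ^ p ^ (n - i) := by
  cases n with
  | zero => simp
  | succ m =>
    have hm := ha m (Nat.lt_succ_self m)
    have key : σ^[m + 1] x = ∑ j ∈ range (m + 1), (p : A) ^ j * σ (a j) ^ p ^ (m - j) := by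
      rw [Function.iterate_succ_apply', ← hm, map_sum]
      apply Finset.sum_congr rfl
      intro j _
      rw [map_mul, map_pow, map_pow, map_natCast]
    rw [key, ← Finset.sum_sub_distrib]
    apply Finset.dvd_sum
    intro j hj
    have hjm : j ≤ m := Nat.lt_succ_iff.mp (Finset.mem_range.mp hj)
    have h1 : (p : A) ∣ σ (a j) - a j ^ p := by
      have := hσ (a j)
      rwa [Ideal.mem_span_singleton] at this
    have h2 : (p : A) ^ (m - j + 1) ∣ σ (a j) ^ p ^ (m - j) - (a j ^ p) ^ p ^ (m - j) :=
      dvd_sub_pow_of_dvd_sub h1 (m - j)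
    have h3 : a j ^ p ^ (m + 1 - j) = (a j ^ p) ^ p ^ (m - j) := by
      rw [← pow_mul, ← pow_succ']
      congr 2
      omega
    rw [h3, ← mul_sub]
    calc (p : A) ^ (m + 1) = (p : A) ^ j * (p : A) ^ (m - j + 1) := by
          rw [← pow_add]; congr 1; omega
      _ ∣ (p : A) ^ j * (σ (a j) ^ p ^ (m - j) - (a j ^ p) ^ p ^ (m - j)) :=
          mul_dvd_mul_left _ h2

/-- existence of partial sequences -/
lemma aux_exists (htf : ∀ x : A, (p : A) * x = 0 → x = 0)
    (σ : A →+* A) (hσ : ∀ x : A, σ x - x ^ p ∈ Ideal.span {(p : A)}) (x : A) :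
    ∀ N : ℕ, ∃ a : ℕ → A,
      ∀ i ≤ N, ∑ j ∈ range (i + 1), (p : A) ^ j * a j ^ p ^ (i - j) = σ^[i] x := by
  intro N
  induction N with
  | zero =>
    refine ⟨fun _ => x, ?_⟩
    intro i hi
    interval_cases i
    simp
  | succ m ih =>
    obtain ⟨a, ha⟩ := ih
    obtain ⟨b, hb⟩ := aux_dvd σ hσ x (m + 1) a (fun i hi => ha i (Nat.lt_succ_iff.mp hi))
    refine ⟨Function.update a (m + 1) b, ?_⟩
    intro i hi
    rcases Nat.lt_succ_iff_lt_or_eq.mp (Nat.lt_succ_of_le hi) with h | h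
    · rw [← ha i (Nat.lt_succ_iff.mp h)]
      apply Finset.sum_congr rfl
      intro j hj
      have : j ≠ m + 1 := by
        have := Finset.mem_range.mp hj; omega
      rw [Function.update_of_ne this]
    · subst h
      rw [Finset.sum_range_succ]
      have hupd : ∀ j ∈ range (m + 1),
          (p : A) ^ j * Function.update a (m + 1) b j ^ p ^ (m + 1 - j)
          = (p : A) ^ j * a j ^ p ^ (m + 1 - j) := by
        intro j hj
        have : j ≠ m + 1 := by have := Finset.mem_range.mp hj; omega
        rw [Function.update_of_ne this]
      rw [Finset.sum_congr rfl hupd, Function.update_self, Nat.sub_self, pow_zero, pow_one,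
        ← hb]
      ring

/-- uniqueness of partial sequences -/
lemma aux_unique (htf : ∀ x : A, (p : A) * x = 0 → x = 0) (x : A) (σ : A →+* A)
    (N : ℕ) (a b : ℕ → A)
    (ha : ∀ i ≤ N, ∑ j ∈ range (i + 1), (p : A) ^ j * a j ^ p ^ (i - j) = σ^[i] x)
    (hb : ∀ i ≤ N, ∑ j ∈ range (i + 1), (p : A) ^ j * b j ^ p ^ (i - j) = σ^[i] x) :
    ∀ i ≤ N, a i = b i := by
  intro i hi
  induction i using Nat.strong_induction_on with
  | _ i ih =>
    have h' : ∑ j ∈ range (i + 1), (p : A) ^ j * a j ^ p ^ (i - j)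
        = ∑ j ∈ range (i + 1), (p : A) ^ j * b j ^ p ^ (i - j) := by
      rw [ha i hi, hb i hi]
    rw [Finset.sum_range_succ, Finset.sum_range_succ] at h'
    have hs : ∑ j ∈ range i, (p : A) ^ j * a j ^ p ^ (i - j)
        = ∑ j ∈ range i, (p : A) ^ j * b j ^ p ^ (i - j) := by
      apply Finset.sum_congr rfl
      intro j hj
      rw [ih j (Finset.mem_range.mp hj) (le_trans (le_of_lt (Finset.mem_range.mp hj)) hi)]
    rw [hs] at h'
    have h2 := add_left_cancel h'
    simp only [Nat.sub_self, pow_zero, pow_one] at h2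
    have h3 : (p : A) ^ i * (a i - b i) = 0 := by rw [mul_sub, h2, sub_self]
    exact sub_eq_zero.mp (aux_pow_cancel htf i _ h3)

end Aux

/-- For a `p`-torsion free commutative ring `A` with a Frobenius lift
`σ : A → A` (i.e. `σ x ≡ x ^ p mod p`), there is a unique ring homomorphism
`s : A → 𝕎 A` such that composing with the `n`-th ghost component gives `σ ^ n`. -/
theorem witt_vector_universal_property_of_frobenius_lift
    (p : ℕ) [Fact p.Prime] (A : Type*) [CommRing A]
    (htf : ∀ x : A, (p : A) * x = 0 → x = 0)
    (σ : A →+* A) (hσ : ∀ x : A, σ x - x ^ p ∈ Ideal.span {(p : A)}) :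
    ∃! s : A →+* WittVector p A,
      ∀ (n : ℕ) (x : A), WittVector.ghostComponent n (s x) = σ^[n] x := by
  classical
  -- the coefficient sequence
  set d : A → ℕ → A := fun x n => Classical.choose (aux_exists htf σ hσ x n) n with hd
  have hdspec : ∀ (x : A) (n : ℕ),
      ∑ j ∈ range (n + 1), (p : A) ^ j * d x j ^ p ^ (n - j) = σ^[n] x := by
    intro x n
    have hspec := Classical.choose_spec (aux_exists htf σ hσ x n)
    have hagree : ∀ j ≤ n, d x j = Classical.choose (aux_exists htf σ hσ x n) j := by
      intro j hj
      have hj1 := Classical.choose_spec (aux_exists htf σ hσ x j)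
      exact aux_unique htf x σ j _ _ hj1
        (fun i hi => hspec i (le_trans hi hj)) j le_rfl
    calc ∑ j ∈ range (n + 1), (p : A) ^ j * d x j ^ p ^ (n - j)
        = ∑ j ∈ range (n + 1),
            (p : A) ^ j * Classical.choose (aux_exists htf σ hσ x n) j ^ p ^ (n - j) := by
          apply Finset.sum_congr rfl
          intro j hj
          rw [hagree j (Nat.lt_succ_iff.mp (Finset.mem_range.mp hj))]
      _ = σ^[n] x := hspec n le_rfl
  -- the ghost components of the candidate
  have hghost : ∀ (x : A) (n : ℕ),
      WittVector.ghostComponent n (WittVector.mk p (d x)) = σ^[n] x := by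
    intro x n
    rw [ghostComponent_apply, aeval_wittPolynomial]
    simpa using hdspec x n
  -- σ^[n] is a ring hom property
  have hiter_add : ∀ (n : ℕ) (x y : A), σ^[n] (x + y) = σ^[n] x + σ^[n] y := by
    intro n x y
    rw [← RingHom.coe_pow, map_add]
  have hiter_mul : ∀ (n : ℕ) (x y : A), σ^[n] (x * y) = σ^[n] x * σ^[n] y := by
    intro n x y
    rw [← RingHom.coe_pow, map_mul]
  have hiter_one : ∀ (n : ℕ), σ^[n] (1 : A) = 1 := by
    intro n
    rw [← RingHom.coe_pow, map_one]
  have hiter_zero : ∀ (n : ℕ), σ^[n] (0 : A) = 0 := by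
    intro n
    rw [← RingHom.coe_pow, map_zero]
  refine ⟨{ toFun := fun x => WittVector.mk p (d x)
            map_one' := ?_
            map_mul' := ?_
            map_zero' := ?_
            map_add' := ?_ }, ?_, ?_⟩
  · apply aux_ghost_inj htf
    intro n
    rw [hghost, map_one, hiter_one]
  · intro x y
    apply aux_ghost_inj htf
    intro n
    rw [hghost, map_mul, hghost, hghost, hiter_mul]
  · apply aux_ghost_inj htf
    intro n
    rw [hghost, map_zero, hiter_zero]
  · intro x y
    apply aux_ghost_inj htf
    intro n
    rw [hghost, map_add, hghost, hghost, hiter_add]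
  · intro n x
    exact hghost x n
  · intro s' hs'
    ext x : 1
    apply aux_ghost_inj htf
    intro n
    rw [hs' n x]
    exact (hghost x n).symm
end

section
/- Let A be a p-torsion free commutative ring with a Frobenius lift σ : A → A, let k be a perfect field of characteristic p, and let f : A → k be a ring homomorphism. Then there is a unique ring homomorphism g : A → W(k) lifting f (i.e., the composite of g with the projection W(k) → k equals f) such that g ∘ σ = F ∘ g, where F is the Witt vector Frobenius on W(k). -/
open WittVector Finset

section Construction

variable (p : ℕ) {A : Type*} [CommRing A] (σ : A →+* A)

open scoped Classical in
/-- Recursively defined Witt coordinates of the canonical (Cartier–Dwork) lift. -/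
noncomputable def wLift (x : A) : ℕ → A
  | n =>
    if h : ∃ c : A, σ^[n] x - ∑ i ∈ (Finset.range n).attach,
        (p : A) ^ (i : ℕ) * (wLift x i) ^ p ^ (n - (i : ℕ)) = (p : A) ^ n * c
    then h.choose else 0
decreasing_by all_goals exact Finset.mem_range.mp i.2

theorem wLift_spec (x : A) (n : ℕ)
    (h : ∃ c : A, σ^[n] x - ∑ i ∈ Finset.range n,
        (p : A) ^ i * (wLift p σ x i) ^ p ^ (n - i) = (p : A) ^ n * c) :
    (p : A) ^ n * wLift p σ x n
      = σ^[n] x - ∑ i ∈ Finset.range n, (p : A) ^ i * (wLift p σ x i) ^ p ^ (n - i) := by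
  have hat : ∑ i ∈ (Finset.range n).attach,
      (p : A) ^ (i : ℕ) * (wLift p σ x i) ^ p ^ (n - (i : ℕ))
      = ∑ i ∈ Finset.range n, (p : A) ^ i * (wLift p σ x i) ^ p ^ (n - i) :=
    Finset.sum_attach (Finset.range n) (fun i => (p : A) ^ i * (wLift p σ x i) ^ p ^ (n - i))
  have h' : ∃ c : A, σ^[n] x - ∑ i ∈ (Finset.range n).attach,
      (p : A) ^ (i : ℕ) * (wLift p σ x i) ^ p ^ (n - (i : ℕ)) = (p : A) ^ n * c := by
    rwa [hat]
  rw [wLift, dif_pos h', ← h'.choose_spec, hat]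

theorem wLift_ghost [hp : Fact p.Prime]
    (hσ : ∀ x : A, σ x - x ^ p ∈ Ideal.span {(p : A)}) (x : A) :
    ∀ n : ℕ, ∑ i ∈ Finset.range (n + 1),
      (p : A) ^ i * (wLift p σ x i) ^ p ^ (n - i) = σ^[n] x := by
  intro n
  induction n with
  | zero =>
      have h : ∃ c : A, σ^[0] x - ∑ i ∈ Finset.range 0,
          (p : A) ^ i * (wLift p σ x i) ^ p ^ (0 - i) = (p : A) ^ 0 * c :=
        ⟨x, by simp⟩
      have := wLift_spec p σ x 0 h
      simpa using this
  | succ n ih =>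
      have hd : (p : A) ^ (n + 1) ∣ σ^[n+1] x - ∑ i ∈ Finset.range (n + 1),
          (p : A) ^ i * (wLift p σ x i) ^ p ^ (n + 1 - i) := by
        have hiter : σ^[n+1] x
            = ∑ i ∈ Finset.range (n + 1), (p : A) ^ i * (σ (wLift p σ x i)) ^ p ^ (n - i) := by
          rw [Function.iterate_succ_apply', ← ih, map_sum]
          refine Finset.sum_congr rfl fun i _ => ?_
          simp [map_mul, map_pow, map_natCast]
        rw [hiter, ← Finset.sum_sub_distrib]
        refine Finset.dvd_sum fun i hi => ?_
        have hi' : i ≤ n := Nat.lt_succ_iff.mp (Finset.mem_range.mp hi)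
        have h1 : (p : A) ∣ σ (wLift p σ x i) - (wLift p σ x i) ^ p :=
          Ideal.mem_span_singleton.mp (hσ _)
        have h2 := dvd_sub_pow_of_dvd_sub h1 (n - i)
        have e1 : (wLift p σ x i) ^ p ^ (n + 1 - i) = ((wLift p σ x i) ^ p) ^ p ^ (n - i) := by
          rw [← pow_mul]
          congr 1
          rw [← pow_succ']
          congr 1
          omega
        rw [e1, ← mul_sub]
        have e2 : (p : A) ^ (n + 1) = (p : A) ^ i * (p : A) ^ (n - i + 1) := by
          rw [← pow_add]
          congr 1
          omega
        rw [e2]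
        exact mul_dvd_mul_left _ h2
      obtain ⟨c, hc⟩ := hd
      have hspec := wLift_spec p σ x (n + 1) ⟨c, hc⟩
      rw [Finset.sum_range_succ]
      have : (p : A) ^ (n + 1) * wLift p σ x (n + 1) ^ p ^ (n + 1 - (n + 1))
          = (p : A) ^ (n + 1) * wLift p σ x (n + 1) := by
        simp
      rw [this, hspec]
      ring

theorem ghost_eq_of_forall [hp : Fact p.Prime]
    (htf : ∀ x : A, (p : A) * x = 0 → x = 0) {u v : WittVector p A}
    (h : ∀ n, WittVector.ghostComponent n u = WittVector.ghostComponent n v) : u = v := by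
  have hreg : ∀ (n : ℕ) (a : A), (p : A) ^ n * a = 0 → a = 0 := by
    intro n
    induction n with
    | zero => intro a ha; simpa using ha
    | succ n ih =>
        intro a ha
        refine htf a (ih _ ?_)
        rw [← mul_assoc, ← pow_succ]
        exact ha
  apply WittVector.ext
  intro n
  induction n using Nat.strong_induction_on with
  | _ n ih =>
    have hg := h n
    rw [WittVector.ghostComponent_apply, WittVector.ghostComponent_apply,
      aeval_wittPolynomial, aeval_wittPolynomial,
      Finset.sum_range_succ, Finset.sum_range_succ] at hg
    have hsum : ∑ i ∈ Finset.range n, (p : A) ^ i * u.coeff i ^ p ^ (n - i)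
        = ∑ i ∈ Finset.range n, (p : A) ^ i * v.coeff i ^ p ^ (n - i) :=
      Finset.sum_congr rfl fun i hi => by rw [ih i (Finset.mem_range.mp hi)]
    rw [hsum] at hg
    have hc := add_left_cancel hg
    simp only [Nat.sub_self, pow_zero, pow_one] at hc
    have : (p : A) ^ n * (u.coeff n - v.coeff n) = 0 := by
      rw [mul_sub, hc, sub_self]
    have := hreg n _ this
    exact sub_eq_zero.mp this

end Construction

/-- If `A` is `p`-torsion free with Frobenius lift `σ`, `k` a perfect field
of characteristic `p`, and `f : A → k` a ring homomorphism, then there is a unique ring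
homomorphism `g : A → W(k)` lifting `f` (projection = 0-th ghost component = 0-th Witt
coordinate) and satisfying `g ∘ σ = F ∘ g` with `F` the Witt vector Frobenius. -/
theorem unique_lift_to_witt_vectors
    (p : ℕ) [Fact p.Prime] (A : Type*) [CommRing A]
    (htf : ∀ x : A, (p : A) * x = 0 → x = 0)
    (σ : A →+* A) (hσ : ∀ x : A, σ x - x ^ p ∈ Ideal.span {(p : A)})
    (k : Type*) [Field k] [CharP k p] [PerfectRing k p]
    (f : A →+* k) :
    ∃! g : A →+* WittVector p k,
      (∀ x : A, WittVector.ghostComponent 0 (g x) = f x) ∧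
      (∀ x : A, g (σ x) = WittVector.frobenius (g x)) := by
  -- ghost component 0 is the 0-th coefficient
  have h0A : ∀ w : WittVector p A, WittVector.ghostComponent 0 w = w.coeff 0 := by
    intro w
    rw [WittVector.ghostComponent_apply, aeval_wittPolynomial]
    simp
  have h0 : ∀ w : WittVector p k, WittVector.ghostComponent 0 w = w.coeff 0 := by
    intro w
    rw [WittVector.ghostComponent_apply, aeval_wittPolynomial]
    simp
  -- the section A → 𝕎 A
  have hG : ∀ u v : WittVector p A,
      (∀ n, WittVector.ghostComponent n u = WittVector.ghostComponent n v) → u = v :=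
    fun u v h => ghost_eq_of_forall p htf h
  set s : A → WittVector p A := fun x => WittVector.mk p (wLift p σ x) with hs
  have hg : ∀ (x : A) (n : ℕ), WittVector.ghostComponent n (s x) = σ^[n] x := by
    intro x n
    rw [WittVector.ghostComponent_apply, aeval_wittPolynomial]
    simpa [hs, WittVector.coeff_mk] using wLift_ghost p σ hσ x n
  obtain ⟨sh, hsh⟩ : ∃ sh : A →+* WittVector p A, ∀ x, sh x = s x := by
    refine ⟨⟨⟨⟨s, ?_⟩, ?_⟩, ?_, ?_⟩, fun x => rfl⟩
    · exact hG _ _ fun n => by rw [hg, iterate_map_one, map_one]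
    · exact fun x y => hG _ _ fun n => by rw [hg, iterate_map_mul, map_mul, hg, hg]
    · exact hG _ _ fun n => by rw [hg, iterate_map_zero, map_zero]
    · exact fun x y => hG _ _ fun n => by rw [hg, iterate_map_add, map_add, hg, hg]
  have hgsh : ∀ (x : A) (n : ℕ), WittVector.ghostComponent n (sh x) = σ^[n] x := by
    intro x n; rw [hsh, hg]
  -- sh intertwines σ and frobenius
  have hshF : ∀ x : A, sh (σ x) = WittVector.frobenius (sh x) := by
    intro x
    refine hG _ _ fun n => ?_
    rw [hgsh, WittVector.ghostComponent_frobenius, hgsh,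
      ← Function.iterate_succ_apply, Function.iterate_succ_apply']
  -- the candidate homomorphism
  set g : A →+* WittVector p k := (WittVector.map f).comp sh with hgdef
  have hcoeff0 : ∀ x : A, (sh x).coeff 0 = x := by
    intro x
    have := hgsh x 0
    rwa [h0A] at this
  have prop1 : ∀ x : A, WittVector.ghostComponent 0 (g x) = f x := by
    intro x
    rw [h0, hgdef, RingHom.comp_apply, WittVector.map_coeff, hcoeff0]
  have prop2 : ∀ x : A, g (σ x) = WittVector.frobenius (g x) := by
    intro x
    rw [hgdef, RingHom.comp_apply, hshF, RingHom.comp_apply]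
    ext n
    simp only [WittVector.map_coeff, WittVector.coeff_frobenius, MvPolynomial.map_aeval]
    apply MvPolynomial.eval₂Hom_congr (RingHom.ext_int _ _) ?_ rfl
    ext i
    simp [WittVector.map_coeff]
  -- uniqueness
  have pnz : (p : WittVector p k) ≠ 0 := WittVector.p_nonzero p k
  have hcancel : ∀ (m : ℕ) (a b : WittVector p k),
      (p : WittVector p k) ^ m * a = (p : WittVector p k) ^ m * b → a = b := by
    intro m a b h
    exact mul_left_cancel₀ (pow_ne_zero m pnz) h
  -- divisibility by p from vanishing of 0-th coefficient
  have hV : ∀ w : WittVector p k, w.coeff 0 = 0 → ∃ u, w = (p : WittVector p k) * u := by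
    intro w hw0
    obtain ⟨u, hu⟩ := (WittVector.frobenius_bijective p k).surjective (w.shift 1)
    refine ⟨u, ?_⟩
    have hiter : w = WittVector.verschiebung (w.shift 1) := by
      have := WittVector.eq_iterate_verschiebung (x := w) (n := 1) ?_
      · simpa using this
      · intro i hi
        interval_cases i
        exact hw0
    rw [hiter, ← hu, WittVector.verschiebung_frobenius, mul_comm]
  -- pulling back p-power divisibility through frobenius
  have hFdvd : ∀ (m : ℕ) (w : WittVector p k),
      (∃ u, WittVector.frobenius w = (p : WittVector p k) ^ m * u) →
      ∃ v, w = (p : WittVector p k) ^ m * v := by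
    rintro m w ⟨u, hu⟩
    refine ⟨(WittVector.frobeniusEquiv p k).symm u, ?_⟩
    have h1 : (WittVector.frobeniusEquiv p k).symm (WittVector.frobenius w) = w := by
      rw [← WittVector.frobeniusEquiv_apply]
      exact (WittVector.frobeniusEquiv p k).symm_apply_apply w
    calc w = (WittVector.frobeniusEquiv p k).symm (WittVector.frobenius w) := h1.symm
      _ = (WittVector.frobeniusEquiv p k).symm ((p : WittVector p k) ^ m * u) := by rw [hu]
      _ = (p : WittVector p k) ^ m * (WittVector.frobeniusEquiv p k).symm u := by
          rw [map_mul, map_pow, map_natCast]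
  -- p-adic separatedness
  have hsep : ∀ w : WittVector p k,
      (∀ n : ℕ, ∃ u, w = (p : WittVector p k) ^ n * u) → w = 0 := by
    intro w hw
    by_contra hne
    obtain ⟨m, b, hb0, hbm⟩ := WittVector.exists_eq_pow_p_mul w hne
    obtain ⟨u, hu⟩ := hw (m + 1)
    have hb : b = (p : WittVector p k) * u := by
      apply hcancel m
      rw [← hbm, hu, pow_succ, mul_comm ((p : WittVector p k) ^ m) (p : WittVector p k),
        mul_assoc, mul_comm (p : WittVector p k) u, ← mul_assoc]
      ring
    apply hb0
    rw [hb, WittVector.mul_coeff_zero, WittVector.coeff_p_zero, zero_mul]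
  -- the main uniqueness argument
  have huniq : ∀ g₁ g₂ : A →+* WittVector p k,
      (∀ x : A, WittVector.ghostComponent 0 (g₁ x) = f x) →
      (∀ x : A, g₁ (σ x) = WittVector.frobenius (g₁ x)) →
      (∀ x : A, WittVector.ghostComponent 0 (g₂ x) = f x) →
      (∀ x : A, g₂ (σ x) = WittVector.frobenius (g₂ x)) →
      g₁ = g₂ := by
    intro g₁ g₂ h1 h2 h1' h2'
    have hP1 : ∀ x : A, ∃ u, g₁ x - g₂ x = (p : WittVector p k) * u := by
      intro x
      apply hV
      have e : WittVector.ghostComponent 0 (g₁ x) = WittVector.ghostComponent 0 (g₂ x) :=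
        (h1 x).trans (h1' x).symm
      rw [h0] at e
      rw [h0] at e  -- rewrite both occurrences handled by first rw? keep safe
      have : (g₁ x - g₂ x).coeff 0 = WittVector.ghostComponent 0 (g₁ x - g₂ x) := (h0 _).symm
      rw [this, map_sub]
      rw [h0, h0, e, sub_self]
    have hPn : ∀ (n : ℕ) (x : A), ∃ u, g₁ x - g₂ x = (p : WittVector p k) ^ n * u := by
      intro n
      induction n with
      | zero => exact fun x => ⟨g₁ x - g₂ x, by simp⟩
      | succ n ih =>
          intro x
          obtain ⟨z, hz⟩ : ∃ z, σ x = x ^ p + (p : A) * z := by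
            obtain ⟨z, hz⟩ := Ideal.mem_span_singleton.mp (hσ x)
            exact ⟨z, by rw [← hz]; ring⟩
          obtain ⟨u, hu⟩ := ih x
          obtain ⟨u', hu'⟩ := ih z
          obtain ⟨w0, hw0⟩ := hP1 x
          set a := g₁ x with ha
          set b := g₂ x with hb
          -- the geometric sum is divisible by p
          have hS : (p : WittVector p k) ∣ ∑ i ∈ Finset.range p, a ^ i * b ^ (p - 1 - i) := by
            have hba : (p : WittVector p k) ∣ b - a := ⟨-w0, by rw [← neg_sub a b, hw0]; ring⟩
            have hd1 : (p : WittVector p k) ∣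
                (∑ i ∈ Finset.range p, a ^ i * b ^ (p - 1 - i))
                  - ∑ i ∈ Finset.range p, a ^ i * a ^ (p - 1 - i) := by
              rw [← Finset.sum_sub_distrib]
              refine Finset.dvd_sum fun i hi => ?_
              rw [← mul_sub]
              exact Dvd.dvd.mul_left
                (dvd_trans hba (sub_dvd_pow_sub_pow b a (p - 1 - i))) _
            have hd2 : ∑ i ∈ Finset.range p, a ^ i * a ^ (p - 1 - i)
                = (p : WittVector p k) * a ^ (p - 1) := by
              have : ∀ i ∈ Finset.range p, a ^ i * a ^ (p - 1 - i) = a ^ (p - 1) := by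
                intro i hi
                rw [← pow_add]
                congr 1
                have := Finset.mem_range.mp hi
                omega
              rw [Finset.sum_congr rfl this, Finset.sum_const, Finset.card_range,
                nsmul_eq_mul]
            have := dvd_add hd1 (Dvd.intro _ rfl : (p : WittVector p k) ∣
              (p : WittVector p k) * a ^ (p - 1))
            rw [← hd2, sub_add_cancel] at this
            exact this
          obtain ⟨T, hT⟩ := hS
          apply hFdvd
          refine ⟨T * u + u', ?_⟩
          have hgeom : a ^ p - b ^ p
              = (∑ i ∈ Finset.range p, a ^ i * b ^ (p - 1 - i)) * (a - b) :=
            (geom_sum₂_mul a b p).symm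
          have hcomp : WittVector.frobenius (a - b)
              = (a ^ p - b ^ p) + (p : WittVector p k) * (g₁ z - g₂ z) := by
            rw [map_sub, ← h2 x, ← h2' x, hz]
            push_cast
            simp only [map_add, map_mul, map_pow, map_natCast]
            ring
          rw [hcomp, hgeom, hT, hu, hu']
          ring
    have hx : ∀ x : A, g₁ x = g₂ x := by
      intro x
      have := hsep (g₁ x - g₂ x) (fun n => hPn n x)
      exact sub_eq_zero.mp this
    exact RingHom.ext hx
  exact ⟨g, ⟨prop1, prop2⟩, fun g' hg' => huniq g' g hg'.1 hg'.2 prop1 prop2⟩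
end

section
/- Let V be a complete discrete valuation ring with perfect residue field k of characteristic p and uniformizer π, and for n ≥ 1 set R_n = V/π^{n+1}. If G and G' are p-divisible groups over V such that G ⊗ R_n ≅ G' ⊗ R_n compatibly for all n (an isomorphism of the inverse systems), then G ≅ G' over V. More generally, the category of p-divisible groups over V is equivalent to the category of compatible systems of p-divisible groups over (R_n)_{n≥1}. -/
/-!
A finite module over a complete Noetherian local ring is adically complete, so each Hopf algebra
`A n` is the limit of its reductions `A n / π^{m+1}`, and likewise `A' n`. The compatible
isomorphisms `φ m n` therefore lift, element by element, to a bijection `A n → A' n`. The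
Hausdorff property holds for `A' n ⊗ A' n` as well, and by right exactness of `⊗` its
reductions are detected by `B' m n ⊗ B' m n`; so every identity between the structure maps that
holds modulo all `π^{m+1}` holds on the nose, making the lift a bialgebra isomorphism.
Compatibility with the transition maps and uniqueness are again the Hausdorff property.
-/

section Adic

open AdicCompletion

variable {R : Type*} [CommRing R] (I : Ideal R)
  {M : Type*} [AddCommGroup M] [Module R M]

theorem AdicCompletion.of_smul_of (s : R) (x : M) :
    of I R s • of I M x = of I M (s • x) :=
  AdicCompletion.ext fun _ => rfl

theorem IsPrecomplete.of_finite [IsPrecomplete I R] [Module.Finite R M] : IsPrecomplete I M := by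
  rw [← of_surjective_iff]
  intro x
  obtain ⟨t, rfl⟩ := ofTensorProduct_surjective_of_finite I M x
  induction t using TensorProduct.induction_on with
  | zero => exact ⟨0, map_zero _⟩
  | tmul r y =>
    obtain ⟨s, rfl⟩ := of_surjective I R r
    exact ⟨s • y, by rw [ofTensorProduct_tmul, of_smul_of]⟩
  | add t t' ht ht' =>
    obtain ⟨y, hy⟩ := ht
    obtain ⟨y', hy'⟩ := ht'
    exact ⟨y + y', by rw [map_add, map_add, hy, hy']⟩

theorem IsAdicComplete.of_finite [IsNoetherianRing R] [IsAdicComplete I R] [Module.Finite R M] :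
    IsAdicComplete I M where
  toIsHausdorff := .of_le_jacobson I M (IsAdicComplete.le_jacobson_bot I)
  toIsPrecomplete := .of_finite I

variable {W : ℕ → Type*} [∀ m, AddCommGroup (W m)] [∀ m, Module R (W m)]

theorem IsHausdorff.eq_of_forall_apply_eq [IsHausdorff I M] (ρ : ∀ m, M →ₗ[R] W m)
    (hρ : ∀ m, LinearMap.ker (ρ m) ≤ I ^ (m + 1) • ⊤) {x y : M} (h : ∀ m, ρ m x = ρ m y) :
    x = y := by
  refine (IsHausdorff.eq_iff_smodEq (I := I)).mpr fun n => ?_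
  rw [SModEq.sub_mem]
  cases n with
  | zero => simp
  | succ m => exact hρ m (by rw [LinearMap.mem_ker, map_sub, h m, sub_self])

theorem IsAdicComplete.existsUnique_forall_apply_eq [IsAdicComplete I M] (ρ : ∀ m, M →ₗ[R] W m)
    (hρ : ∀ m, Function.Surjective (ρ m)) (hker : ∀ m, LinearMap.ker (ρ m) = I ^ (m + 1) • ⊤)
    (v : ∀ m, W (m + 1) → W m) (hv : ∀ m x, v m (ρ (m + 1) x) = ρ m x)
    (b : ∀ m, W m) (hb : ∀ m, v m (b (m + 1)) = b m) :
    ∃! x : M, ∀ m, ρ m x = b m := by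
  have hdesc : ∀ {m n}, m ≤ n → ∀ x, ρ n x = b n → ρ m x = b m := by
    intro m n hmn
    induction n, hmn using Nat.le_induction with
    | base => exact fun _ h => h
    | succ n _ ih => exact fun x hx => ih x (by rw [← hv, hx, hb])
  choose a ha using fun m => hρ m (b m)
  have hsub : ∀ {m n}, m ≤ n → a n - a m ∈ I ^ (m + 1) • (⊤ : Submodule R M) := fun hmn => by
    rw [← hker, LinearMap.mem_ker, map_sub, hdesc hmn _ (ha _), ha, sub_self]
  obtain ⟨x, hx⟩ := IsPrecomplete.prec (I := I) inferInstance (f := a) fun hmn => by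
    rw [SModEq.sub_mem, ← neg_mem_iff, neg_sub]
    exact Submodule.pow_smul_top_le I M (Nat.le_succ _) (hsub hmn)
  have hxb : ∀ m, ρ m x = b m := fun m => by
    have : x - a (m + 1) ∈ LinearMap.ker (ρ m) := by
      rw [hker, ← neg_mem_iff, neg_sub, ← SModEq.sub_mem]
      exact hx (m + 1)
    rw [LinearMap.mem_ker, map_sub, sub_eq_zero] at this
    rw [this, hdesc (Nat.le_succ m) _ (ha _)]
  exact ⟨x, hxb, fun y hy =>
    IsHausdorff.eq_of_forall_apply_eq I ρ (fun m => (hker m).le) fun m => (hy m).trans (hxb m).symm⟩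

end Adic

open TensorProduct in
theorem TensorProduct.ker_map_le_smul_top {R : Type*} [CommRing R] (I : Ideal R)
    {M N P Q : Type*} [AddCommGroup M] [Module R M] [AddCommGroup N] [Module R N]
    [AddCommGroup P] [Module R P] [AddCommGroup Q] [Module R Q]
    {f : M →ₗ[R] P} {g : N →ₗ[R] Q} (hf : Function.Surjective f) (hg : Function.Surjective g)
    (hkf : LinearMap.ker f ≤ I • ⊤) (hkg : LinearMap.ker g ≤ I • ⊤) :
    LinearMap.ker (map f g) ≤ I • ⊤ := by
  rw [TensorProduct.map_ker (hfg := f.exact_subtype_ker_map) (hg := hf)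
    (hfg' := g.exact_subtype_ker_map) (hg' := hg)]
  refine sup_le ?_ ?_ <;> rintro _ ⟨z, rfl⟩
  · induction z using TensorProduct.induction_on with
    | zero => simp
    | tmul x k => exact Submodule.smul_top_le_comap_smul_top I (mk R M N x) (hkg k.2)
    | add z z' hz hz' => rw [map_add]; exact add_mem hz hz'
  · induction z using TensorProduct.induction_on with
    | zero => simp
    | tmul k y => exact Submodule.smul_top_le_comap_smul_top I ((mk R M N).flip y) (hkf k.2)
    | add z z' hz hz' => rw [map_add]; exact add_mem hz hz'

theorem AlgHomClass.ker_toLinearMap_eq_smul_top {R S T F : Type*} [CommRing R] [CommRing S]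
    [Algebra R S] [Semiring T] [Algebra R T] [FunLike F S T] [AlgHomClass F R S T] (f : F)
    {J : Ideal R} (h : RingHom.ker (f : S →+* T) = J.map (algebraMap R S)) :
    LinearMap.ker (f : S →ₗ[R] T) = J • ⊤ := by
  ext x
  rw [Ideal.smul_top_eq_map, ← h, Submodule.restrictScalars_mem, RingHom.mem_ker,
    LinearMap.mem_ker]
  rfl

section Bialgebra

open TensorProduct

variable {R : Type*} [CommRing R] (I : Ideal R) [IsNoetherianRing R] [IsAdicComplete I R]
  {A A' : Type*} [Ring A] [Bialgebra R A] [Ring A'] [Bialgebra R A'] [Module.Finite R A']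
  {B' : ℕ → Type*} [∀ m, Ring (B' m)] [∀ m, Bialgebra R (B' m)]

theorem Bialgebra.exists_bialgHom_forall_apply_eq (ρ : ∀ m, A' →ₐc[R] B' m)
    (hρ : ∀ m, Function.Surjective (ρ m))
    (hker : ∀ m, LinearMap.ker (ρ m : A' →ₗ[R] B' m) = I ^ (m + 1) • ⊤)
    (v : ∀ m, B' (m + 1) → B' m) (hv : ∀ m x, v m (ρ (m + 1) x) = ρ m x)
    (ψ : ∀ m, A →ₐc[R] B' m) (hψ : ∀ m x, v m (ψ (m + 1) x) = ψ m x) :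
    ∃ F : A →ₐc[R] A', ∀ m x, ρ m (F x) = ψ m x := by
  have : IsAdicComplete I A' := .of_finite I
  have hρ_inj : ∀ {x y : A'}, (∀ m, ρ m x = ρ m y) → x = y :=
    IsHausdorff.eq_of_forall_apply_eq I (fun m => (ρ m : A' →ₗ[R] B' m)) fun m => (hker m).le
  have hρρ_inj : ∀ {z w : A' ⊗[R] A'}, (∀ m, map (ρ m : A' →ₗ[R] B' m) (ρ m : A' →ₗ[R] B' m) z =
      map (ρ m : A' →ₗ[R] B' m) (ρ m : A' →ₗ[R] B' m) w) → z = w := by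
    have : IsHausdorff I (A' ⊗[R] A') := .of_le_jacobson I _ (IsAdicComplete.le_jacobson_bot I)
    intro z w h
    exact IsHausdorff.eq_of_forall_apply_eq I
      (fun m => map (ρ m : A' →ₗ[R] B' m) (ρ m : A' →ₗ[R] B' m))
      (fun m => ker_map_le_smul_top _ (hρ m) (hρ m) (hker m).le (hker m).le) h
  choose F hF₀ using fun x => (IsAdicComplete.existsUnique_forall_apply_eq I
    (fun m => (ρ m : A' →ₗ[R] B' m)) hρ hker v hv (fun m => ψ m x) fun m => hψ m x).exists
  have hF : ∀ m x, ρ m (F x) = ψ m x := fun m x => hF₀ x m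
  have hF_add : ∀ x y, F (x + y) = F x + F y := fun x y => hρ_inj fun m => by
    simp only [map_add, hF]
  have hF_smul : ∀ (c : R) x, F (c • x) = c • F x := fun c x => hρ_inj fun m => by
    simp only [map_smul, hF]
  have hF_one : F 1 = 1 := hρ_inj fun m => by simp only [map_one, hF]
  have hF_mul : ∀ x y, F (x * y) = F x * F y := fun x y => hρ_inj fun m => by
    simp only [map_mul, hF]
  let Fₗ : A →ₗ[R] A' := ⟨⟨F, hF_add⟩, hF_smul⟩
  have hFₗ : ∀ m, (ρ m : A' →ₗ[R] B' m) ∘ₗ Fₗ = ψ m := fun m => LinearMap.ext (hF m)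
  refine ⟨{ Fₗ with
    map_one' := hF_one
    map_mul' := hF_mul
    counit_comp := LinearMap.ext fun x => ?_
    map_comp_comul := LinearMap.ext fun x => hρρ_inj fun m => ?_ }, hF⟩
  · change Coalgebra.counit (F x) = Coalgebra.counit x
    rw [← CoalgHomClass.counit_comp_apply (ρ 0), hF, CoalgHomClass.counit_comp_apply]
  · rw [LinearMap.comp_apply, LinearMap.comp_apply, ← LinearMap.comp_apply (map _ _), ← map_comp,
      hFₗ, CoalgHomClass.map_comp_comul_apply, CoalgHomClass.map_comp_comul_apply]
    exact congrArg _ (hF m x).symm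

theorem Bialgebra.exists_bialgEquiv_forall_apply_eq [Module.Finite R A]
    {B : ℕ → Type*} [∀ m, Ring (B m)] [∀ m, Bialgebra R (B m)]
    (r : ∀ m, A →ₐc[R] B m) (hr : ∀ m, Function.Surjective (r m))
    (hker : ∀ m, LinearMap.ker (r m : A →ₗ[R] B m) = I ^ (m + 1) • ⊤)
    (v : ∀ m, B (m + 1) → B m) (hv : ∀ m x, v m (r (m + 1) x) = r m x)
    (r' : ∀ m, A' →ₐc[R] B' m) (hr' : ∀ m, Function.Surjective (r' m))
    (hker' : ∀ m, LinearMap.ker (r' m : A' →ₗ[R] B' m) = I ^ (m + 1) • ⊤)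
    (v' : ∀ m, B' (m + 1) → B' m) (hv' : ∀ m x, v' m (r' (m + 1) x) = r' m x)
    (φ : ∀ m, B m ≃ₐc[R] B' m) (hφ : ∀ m y, φ m (v m y) = v' m (φ (m + 1) y)) :
    ∃ Φ : A ≃ₐc[R] A', ∀ m x, r' m (Φ x) = φ m (r m x) := by
  have hφ_symm : ∀ m y, (φ m).symm (v' m y) = v m ((φ (m + 1)).symm y) := fun m y => by
    apply EquivLike.injective (φ m)
    rw [BialgEquiv.apply_symm_apply, hφ, BialgEquiv.apply_symm_apply]
  obtain ⟨F, hF⟩ := exists_bialgHom_forall_apply_eq I r' hr' hker' v' hv'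
    (fun m => (φ m : B m →ₐc[R] B' m).comp (r m)) fun m x => by simp [← hφ, hv]
  obtain ⟨G, hG⟩ := exists_bialgHom_forall_apply_eq I r hr hker v hv
    (fun m => ((φ m).symm : B' m →ₐc[R] B m).comp (r' m)) fun m y => by simp [← hφ_symm, hv']
  have : IsAdicComplete I A := .of_finite I
  have : IsAdicComplete I A' := .of_finite I
  have hFG : F.comp G = BialgHom.id R A' := BialgHom.ext fun y =>
    IsHausdorff.eq_of_forall_apply_eq I (fun m => (r' m : A' →ₗ[R] B' m)) (fun m => (hker' m).le)
      fun m => by simp [hF, hG]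
  have hGF : G.comp F = BialgHom.id R A := BialgHom.ext fun x =>
    IsHausdorff.eq_of_forall_apply_eq I (fun m => (r m : A →ₗ[R] B m)) (fun m => (hker m).le)
      fun m => by simp [hF, hG]
  exact ⟨.ofBialgHom F G hFG hGF, hF⟩

end Bialgebra

theorem pdivisible_group_determined_by_reductions_general
    (V : Type) [CommRing V] [IsDomain V] [IsDiscreteValuationRing V]
    [IsAdicComplete (IsLocalRing.maximalIdeal V) V]
    (π : V) (hπ : Irreducible π)
    -- the two p-divisible groups over V, as towers of finite locally free
    -- commutative Hopf algebras with surjective transition maps: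
    (A A' : ℕ → Type)
    [∀ n, CommRing (A n)] [∀ n, HopfAlgebra V (A n)]
    [∀ n, Module.Finite V (A n)]
    [∀ n, CommRing (A' n)] [∀ n, HopfAlgebra V (A' n)]
    [∀ n, Module.Finite V (A' n)]
    (t : ∀ n, A (n + 1) →ₐc[V] A n)
    (t' : ∀ n, A' (n + 1) →ₐc[V] A' n)
    -- the reductions mod π^{m+1} of the two towers:
    (B B' : ℕ → ℕ → Type)
    [∀ m n, CommRing (B m n)] [∀ m n, HopfAlgebra V (B m n)]
    [∀ m n, CommRing (B' m n)] [∀ m n, HopfAlgebra V (B' m n)]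
    (r : ∀ m n, A n →ₐc[V] B m n) (hr : ∀ m n, Function.Surjective (r m n))
    (hker : ∀ m n, RingHom.ker (r m n : A n →+* B m n)
      = Ideal.span {algebraMap V (A n) (π ^ (m + 1))})
    (r' : ∀ m n, A' n →ₐc[V] B' m n) (hr' : ∀ m n, Function.Surjective (r' m n))
    (hker' : ∀ m n, RingHom.ker (r' m n : A' n →+* B' m n)
      = Ideal.span {algebraMap V (A' n) (π ^ (m + 1))})
    -- transition maps of the reduced towers, compatible with r and t:
    (u : ∀ m n, B m (n + 1) →ₐc[V] B m n)
    (hu : ∀ m n (x : A (n + 1)), u m n (r m (n + 1) x) = r m n (t n x))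
    (u' : ∀ m n, B' m (n + 1) →ₐc[V] B' m n)
    (hu' : ∀ m n (x : A' (n + 1)), u' m n (r' m (n + 1) x) = r' m n (t' n x))
    -- reduction maps mod π^{m+1} of the reductions mod π^{m+2}:
    (v : ∀ m n, B (m + 1) n →ₐc[V] B m n)
    (hv : ∀ m n (x : A n), v m n (r (m + 1) n x) = r m n x)
    (v' : ∀ m n, B' (m + 1) n →ₐc[V] B' m n)
    (hv' : ∀ m n (x : A' n), v' m n (r' (m + 1) n x) = r' m n x)
    -- the compatible system of isomorphisms G ⊗ Rₘ ≅ G' ⊗ Rₘ: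
    (φ : ∀ m n, B m n ≃ₐc[V] B' m n)
    (hφu : ∀ m n (x : B m (n + 1)), φ m n (u m n x) = u' m n (φ m (n + 1) x))
    (hφv : ∀ m n (x : B (m + 1) n), φ m n (v m n x) = v' m n (φ (m + 1) n x)) :
    -- then G ≅ G' over V, by a unique isomorphism of towers inducing the φ's:
    ∃ Φ : ∀ n, A n ≃ₐc[V] A' n,
      (∀ n (x : A (n + 1)), Φ n (t n x) = t' n (Φ (n + 1) x)) ∧
      (∀ m n (x : A n), r' m n (Φ n x) = φ m n (r m n x)) ∧
      (∀ Ψ : ∀ n, A n ≃ₐc[V] A' n,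
        (∀ n (x : A (n + 1)), Ψ n (t n x) = t' n (Ψ (n + 1) x)) →
        (∀ m n (x : A n), r' m n (Ψ n x) = φ m n (r m n x)) →
        ∀ n (x : A n), Ψ n x = Φ n x) := by
  have hπ_pow : ∀ m, IsLocalRing.maximalIdeal V ^ (m + 1) = Ideal.span {π ^ (m + 1)} :=
    fun m => by
      rw [(IsDiscreteValuationRing.irreducible_iff_uniformizer π).mp hπ, Ideal.span_singleton_pow]
  have hkerA : ∀ m n, LinearMap.ker (r m n : A n →ₗ[V] B m n) =
      IsLocalRing.maximalIdeal V ^ (m + 1) • ⊤ :=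
    fun m n => AlgHomClass.ker_toLinearMap_eq_smul_top (r m n) <| by
      rw [hker, hπ_pow, Ideal.map_span, Set.image_singleton]
  have hkerA' : ∀ m n, LinearMap.ker (r' m n : A' n →ₗ[V] B' m n) =
      IsLocalRing.maximalIdeal V ^ (m + 1) • ⊤ :=
    fun m n => AlgHomClass.ker_toLinearMap_eq_smul_top (r' m n) <| by
      rw [hker', hπ_pow, Ideal.map_span, Set.image_singleton]
  choose Φ hΦ using fun n =>
    Bialgebra.exists_bialgEquiv_forall_apply_eq (IsLocalRing.maximalIdeal V)
    (fun m => r m n) (fun m => hr m n) (fun m => hkerA m n) (fun m => v m n) (fun m => hv m n)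
    (fun m => r' m n) (fun m => hr' m n) (fun m => hkerA' m n) (fun m => v' m n)
    (fun m => hv' m n) (fun m => φ m n) fun m => hφv m n
  have hr'_inj : ∀ n {y z : A' n}, (∀ m, r' m n y = r' m n z) → y = z := fun n _ _ =>
    IsHausdorff.eq_of_forall_apply_eq (IsLocalRing.maximalIdeal V)
      (fun m => (r' m n : A' n →ₗ[V] B' m n)) fun m => (hkerA' m n).le
  refine ⟨Φ, fun n x => hr'_inj n fun m => ?_, fun m n x => hΦ n m x,
    fun Ψ _ hΨ n x => hr'_inj n fun m => by rw [hΨ, hΦ]⟩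
  calc r' m n (Φ n (t n x))
      = φ m n (u m n (r m (n + 1) x)) := by rw [hΦ, hu]
    _ = u' m n (r' m (n + 1) (Φ (n + 1) x)) := by rw [hφu, hΦ]
    _ = r' m n (t' n (Φ (n + 1) x)) := hu' m n _

/-- Let `V` be a complete discrete valuation ring with perfect residue
field of characteristic `p` and uniformizer `π`, and set `Rₘ = V/π^{m+1}`.  p-divisible
groups over `V` are, contravariantly, towers `(A n)` of finite locally free commutative
`V`-Hopf algebras with surjective transition maps (of `p`-power ranks `p^{n·h}`).  The
reduction `G ⊗ Rₘ` corresponds to the quotient Hopf algebra `A n / π^{m+1}`, encoded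
below by a surjective bialgebra map `A n → B m n` with kernel `(π^{m+1})`, onto a
Hopf algebra killed by `π^{m+1}` (i.e. an `Rₘ`-Hopf algebra).  If `G ⊗ Rₘ ≅ G' ⊗ Rₘ`
compatibly for all `m` (an isomorphism of the inverse systems), then `G ≅ G'` over `V`,
by a unique isomorphism inducing the given ones; this expresses the equivalence of the
category of `p`-divisible groups over `V` with that of compatible systems over
`(Rₘ)`. -/
theorem pdivisible_group_determined_by_reductions
    (p : ℕ) [Fact p.Prime]
    (V : Type) [CommRing V] [IsDomain V] [IsDiscreteValuationRing V]
    [IsAdicComplete (IsLocalRing.maximalIdeal V) V]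
    [CharP (IsLocalRing.ResidueField V) p]
    [PerfectRing (IsLocalRing.ResidueField V) p]
    (π : V) (hπ : Irreducible π)
    (h h' : ℕ)
    -- the two p-divisible groups over V, as towers of finite locally free
    -- commutative Hopf algebras with surjective transition maps:
    (A A' : ℕ → Type)
    [∀ n, CommRing (A n)] [∀ n, HopfAlgebra V (A n)]
    [∀ n, Module.Finite V (A n)] [∀ n, Module.Projective V (A n)]
    [∀ n, CommRing (A' n)] [∀ n, HopfAlgebra V (A' n)]
    [∀ n, Module.Finite V (A' n)] [∀ n, Module.Projective V (A' n)]
    (hA : ∀ n, Module.finrank V (A n) = p ^ (n * h))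
    (hA' : ∀ n, Module.finrank V (A' n) = p ^ (n * h'))
    (t : ∀ n, A (n + 1) →ₐc[V] A n) (ht : ∀ n, Function.Surjective (t n))
    (t' : ∀ n, A' (n + 1) →ₐc[V] A' n) (ht' : ∀ n, Function.Surjective (t' n))
    -- the reductions mod π^{m+1} of the two towers:
    (B B' : ℕ → ℕ → Type)
    [∀ m n, CommRing (B m n)] [∀ m n, HopfAlgebra V (B m n)]
    [∀ m n, CommRing (B' m n)] [∀ m n, HopfAlgebra V (B' m n)]
    (hB : ∀ m n (x : B m n), (π ^ (m + 1)) • x = 0)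
    (hB' : ∀ m n (x : B' m n), (π ^ (m + 1)) • x = 0)
    (r : ∀ m n, A n →ₐc[V] B m n) (hr : ∀ m n, Function.Surjective (r m n))
    (hker : ∀ m n, RingHom.ker (r m n : A n →+* B m n)
      = Ideal.span {algebraMap V (A n) (π ^ (m + 1))})
    (r' : ∀ m n, A' n →ₐc[V] B' m n) (hr' : ∀ m n, Function.Surjective (r' m n))
    (hker' : ∀ m n, RingHom.ker (r' m n : A' n →+* B' m n)
      = Ideal.span {algebraMap V (A' n) (π ^ (m + 1))})
    -- transition maps of the reduced towers, compatible with r and t: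
    (u : ∀ m n, B m (n + 1) →ₐc[V] B m n)
    (hu : ∀ m n (x : A (n + 1)), u m n (r m (n + 1) x) = r m n (t n x))
    (u' : ∀ m n, B' m (n + 1) →ₐc[V] B' m n)
    (hu' : ∀ m n (x : A' (n + 1)), u' m n (r' m (n + 1) x) = r' m n (t' n x))
    -- reduction maps mod π^{m+1} of the reductions mod π^{m+2}:
    (v : ∀ m n, B (m + 1) n →ₐc[V] B m n)
    (hv : ∀ m n (x : A n), v m n (r (m + 1) n x) = r m n x)
    (v' : ∀ m n, B' (m + 1) n →ₐc[V] B' m n)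
    (hv' : ∀ m n (x : A' n), v' m n (r' (m + 1) n x) = r' m n x)
    -- the compatible system of isomorphisms G ⊗ Rₘ ≅ G' ⊗ Rₘ:
    (φ : ∀ m n, B m n ≃ₐc[V] B' m n)
    (hφu : ∀ m n (x : B m (n + 1)), φ m n (u m n x) = u' m n (φ m (n + 1) x))
    (hφv : ∀ m n (x : B (m + 1) n), φ m n (v m n x) = v' m n (φ (m + 1) n x)) :
    -- then G ≅ G' over V, by a unique isomorphism of towers inducing the φ's:
    ∃ Φ : ∀ n, A n ≃ₐc[V] A' n,
      (∀ n (x : A (n + 1)), Φ n (t n x) = t' n (Φ (n + 1) x)) ∧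
      (∀ m n (x : A n), r' m n (Φ n x) = φ m n (r m n x)) ∧
      (∀ Ψ : ∀ n, A n ≃ₐc[V] A' n,
        (∀ n (x : A (n + 1)), Ψ n (t n x) = t' n (Ψ (n + 1) x)) →
        (∀ m n (x : A n), r' m n (Ψ n x) = φ m n (r m n x)) →
        ∀ n (x : A n), Ψ n x = Φ n x) :=
  pdivisible_group_determined_by_reductions_general V π hπ A A' t t' B B' r hr hker r' hr' hker' u
    hu u' hu' v hv v' hv' φ hφu hφv
end
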